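/- Let k be a number field, L/k a finite Galois extension of degree m, and suppose θ_1, ..., θ_m ∈ 𝒪_L form a basis of L over k, with |θ_i^σ|_τ ≤ B for every embedding τ: L → ℂ extending an embedding of k and every σ ∈ Gal(L/k). Then the absolute norm N_{k/ℚ}(Δ_{L/k}) of the relative discriminant is at most (m! · B^m)^{2[k:ℚ]}. -/

import Mathlib

open NumberField

/-- Let `L/k` be a finite Galois extension of number fields of degree `m`, and let
`θ₁, …, θ_m ∈ 𝒪_L` form a basis of `L` over `k` with `|θ_i^σ|_τ ≤ B` for every embedding
`τ : L → ℂ` and every `σ ∈ Gal(L/k)`. Then the absolute norm of the relative discriminant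
`Δ_{L/k}` (an ideal of `𝒪_k` dividing the principal ideal generated by
`det((θ_i^{σ_j}))²`) is at most `(m! · B^m)^(2[k:ℚ])`. -/
theorem stmt2 (k L : Type*) [Field k] [NumberField k] [Field L] [NumberField L]
    [Algebra k L] [IsGalois k L] (m : ℕ) (hm : Module.finrank k L = m)
    (θ : Fin m → 𝓞 L) (b : Module.Basis (Fin m) k L) (hb : ∀ i, b i = (θ i : L))
    (e : Fin m ≃ (L ≃ₐ[k] L)) (B : ℝ)
    (hB : ∀ (τ : L →+* ℂ) (i j : Fin m), ‖τ ((e j) ((θ i : L)))‖ ≤ B)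
    (Δ : Ideal (𝓞 k)) (x : 𝓞 k)
    (hx : algebraMap k L (x : k) = (Matrix.det (Matrix.of fun i j => (e j) ((θ i : L)))) ^ 2)
    (hdvd : Ideal.span {x} ≤ Δ) :
    (Ideal.absNorm Δ : ℝ) ≤ ((m.factorial : ℝ) * B ^ m) ^ (2 * Module.finrank ℚ k) := by
  classical
  have hfd : FiniteDimensional k L := FiniteDimensional.right ℚ k L
  have hm1 : 0 < m := hm ▸ Module.finrank_pos
  set M : Matrix (Fin m) (Fin m) L := Matrix.of fun i j => (e j) ((θ i : L)) with hM
  have hBnn : 0 ≤ B := by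
    obtain ⟨τ⟩ : Nonempty (L →+* ℂ) := by
      rw [← Fintype.card_pos_iff, NumberField.Embeddings.card L ℂ]
      exact Module.finrank_pos
    exact le_trans (norm_nonneg _) (hB τ ⟨0, hm1⟩ ⟨0, hm1⟩)
  -- bound on the determinant through any embedding
  have hdet : ∀ τ : L →+* ℂ, ‖(M.map τ).det‖ ≤ (m.factorial : ℝ) * B ^ m := by
    intro τ
    rw [Matrix.det_apply]
    calc ‖∑ p : Equiv.Perm (Fin m),
            Equiv.Perm.sign p • ∏ i, (M.map τ) (p i) i‖
        ≤ ∑ p : Equiv.Perm (Fin m),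
            ‖Equiv.Perm.sign p • ∏ i, (M.map τ) (p i) i‖ :=
          norm_sum_le _ _
      _ ≤ ∑ _p : Equiv.Perm (Fin m), B ^ m := by
          refine Finset.sum_le_sum fun p _ => ?_
          have hsign : ‖Equiv.Perm.sign p • ∏ i, (M.map τ) (p i) i‖
              = ‖∏ i, (M.map τ) (p i) i‖ := by
            rcases Int.units_eq_one_or (Equiv.Perm.sign p) with h | h <;>
              simp [h, Units.smul_def]
          rw [hsign, norm_prod]
          have hle : ∏ i : Fin m, ‖(M.map τ) (p i) i‖ ≤ ∏ _i : Fin m, B :=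
            Finset.prod_le_prod (fun i _ => norm_nonneg _)
              (fun i _ => by simpa [hM] using hB τ (p i) i)
          simpa using hle
      _ = (m.factorial : ℝ) * B ^ m := by
          rw [Finset.sum_const, Finset.card_univ, Fintype.card_perm, Fintype.card_fin,
            nsmul_eq_mul]
  -- bound on each embedding of x
  have key : ∀ σ : k →+* ℂ, σ (x : k) ≠ 0 ∧
      ‖σ (x : k)‖ ≤ ((m.factorial : ℝ) * B ^ m) ^ 2 := by
    intro σ
    letI : Algebra k ℂ := σ.toAlgebra
    let τ' : L →ₐ[k] ℂ := IsAlgClosed.lift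
    have hσ : σ (x : k) = ((M.map τ'.toRingHom).det) ^ 2 := by
      have h1 : σ (x : k) = τ' (algebraMap k L (x : k)) := by
        rw [AlgHom.commutes]; rfl
      rw [h1, hx, map_pow]
      exact congrArg (· ^ 2) (RingHom.map_det τ'.toRingHom M)
    -- relate to the discriminant to show nonvanishing
    let f : Fin m → (L →ₐ[k] ℂ) := fun j => τ'.comp (e j).toAlgHom
    have hfinj : Function.Injective f := by
      intro i j h
      apply e.injective
      ext y
      exact τ'.toRingHom.injective (DFunLike.congr_fun h y)
    have hcard : Fintype.card (L →ₐ[k] ℂ) = m := by rw [AlgHom.card k L ℂ, hm]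
    let e' : Fin m ≃ (L →ₐ[k] ℂ) :=
      Equiv.ofBijective f ((Fintype.bijective_iff_injective_and_card f).2
        ⟨hfinj, by simp [hcard]⟩)
    have hME : Algebra.embeddingsMatrixReindex k ℂ (⇑b) e' = M.map τ'.toRingHom := by
      ext i j
      simp [Algebra.embeddingsMatrixReindex, Algebra.embeddingsMatrix, hb, hM, e', f]
    have hd0 : ((M.map τ'.toRingHom).det) ^ 2 ≠ 0 := by
      rw [← hME, ← Algebra.discr_eq_det_embeddingsMatrixReindex_pow_two k ℂ (⇑b) e']
      exact (map_ne_zero_iff (algebraMap k ℂ) (RingHom.injective _)).2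
        (Algebra.discr_not_zero_of_basis k b)
    refine ⟨by rw [hσ]; exact hd0, ?_⟩
    rw [hσ, norm_pow]
    exact pow_le_pow_left₀ (norm_nonneg _) (hdet τ'.toRingHom) 2
  -- x is nonzero
  have hneq : (x : k) ≠ 0 := by
    obtain ⟨φ⟩ : Nonempty (k →+* ℂ) := by
      rw [← Fintype.card_pos_iff, NumberField.Embeddings.card k ℂ]
      exact Module.finrank_pos
    intro h
    exact (key φ).1 (by rw [h, map_zero])
  have hx0 : x ≠ 0 := fun h => hneq (by rw [h]; exact map_zero _)
  -- bound the norm of x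
  have hnorm : ((Algebra.norm ℤ x).natAbs : ℝ)
      ≤ ((m.factorial : ℝ) * B ^ m) ^ (2 * Module.finrank ℚ k) := by
    have h1 : algebraMap ℚ ℂ (Algebra.norm ℚ (x : k)) = ∏ φ : k →ₐ[ℚ] ℂ, φ (x : k) :=
      Algebra.norm_eq_prod_embeddings ℚ ℂ _
    have h2 : ‖algebraMap ℚ ℂ (Algebra.norm ℚ (x : k))‖
        ≤ ((m.factorial : ℝ) * B ^ m) ^ (2 * Module.finrank ℚ k) := by
      rw [h1, norm_prod]
      calc ∏ φ : k →ₐ[ℚ] ℂ, ‖φ (x : k)‖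
          ≤ ∏ _φ : k →ₐ[ℚ] ℂ, ((m.factorial : ℝ) * B ^ m) ^ 2 :=
            Finset.prod_le_prod (fun _ _ => norm_nonneg _)
              (fun φ _ => (key φ.toRingHom).2)
        _ = (((m.factorial : ℝ) * B ^ m) ^ 2) ^ (Fintype.card (k →ₐ[ℚ] ℂ)) := by
            rw [Finset.prod_const, Finset.card_univ]
        _ = ((m.factorial : ℝ) * B ^ m) ^ (2 * Module.finrank ℚ k) := by
            rw [AlgHom.card ℚ k ℂ, ← pow_mul]
    have h3 : ((Algebra.norm ℤ x).natAbs : ℝ)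
        = ‖algebraMap ℚ ℂ (Algebra.norm ℚ (x : k))‖ := by
      rw [← Algebra.coe_norm_int,
        map_intCast (algebraMap ℚ ℂ) (Algebra.norm ℤ x),
        Complex.norm_intCast, Nat.cast_natAbs, Int.cast_abs]
    rw [h3]; exact h2
  -- put things together
  have hdvd2 : Ideal.absNorm Δ ∣ Ideal.absNorm (Ideal.span {x}) :=
    Ideal.absNorm_dvd_absNorm_of_le hdvd
  rw [Ideal.absNorm_span_singleton] at hdvd2
  have hnz : (Algebra.norm ℤ x).natAbs ≠ 0 := by
    rw [Int.natAbs_ne_zero]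
    intro h
    have : (Algebra.norm ℤ x : ℚ) = 0 := by rw [h]; norm_num
    rw [Algebra.coe_norm_int] at this
    exact (Algebra.norm_ne_zero_iff.2 hneq) this
  have hle : Ideal.absNorm Δ ≤ (Algebra.norm ℤ x).natAbs :=
    Nat.le_of_dvd (Nat.pos_of_ne_zero hnz) hdvd2
  exact le_trans (by exact_mod_cast hle) hnorm
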